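/- Every node x_i in the set M^1_0 = {x_i : q_i < K_{ij} + q_j for all x_j ∈ N(x_i) with j ≠ i} is motionless for sufficiently large p < 1: there exists p < 1 such that for every path y starting at x_i with y_1 ≠ x_i, the expected cost satisfies J^p(y) ≥ q_i (assuming all K_{ij} ≥ 0, K_{ii} = 0, and q_i > 0). -/

import Mathlib

open scoped BigOperators

/-- Cost of the finite path `y 0, ..., y t`. -/
noncomputable def pathCost {X : Type*} (K : X → X → ℝ) (q : X → ℝ) (y : ℕ → X) (t : ℕ) : ℝ :=
  (∑ k ∈ Finset.range t, K (y k) (y (k + 1))) + q (y t)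

/-- Expected cost of an infinite path with per-step termination probability `p`:
`J(y) = ∑_{t=1}^∞ (1-p)^{t-1} p · Cost(y_0,...,y_t)`. -/
noncomputable def Jcost {X : Type*} (K : X → X → ℝ) (q : X → ℝ) (p : ℝ) (y : ℕ → X) : ℝ :=
  ∑' t : ℕ, (1 - p) ^ t * p * pathCost K q y (t + 1)


theorem stmt9 {X : Type*} [Fintype X] (N : X → Finset X) (hself : ∀ x, x ∈ N x)
    (K : X → X → ℝ) (hK0 : ∀ x, K x x = 0) (hKpos : ∀ x y, y ≠ x → 0 ≤ K x y)
    (q : X → ℝ) (hq : ∀ x, 0 < q x)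
    (i : X) (hi : ∀ j ∈ N i, j ≠ i → q i < K i j + q j) :
    ∃ p : ℝ, 0 < p ∧ p < 1 ∧
      ∀ y : ℕ → X, y 0 = i → (∀ k, y (k + 1) ∈ N (y k)) → y 1 ≠ i →
        q i ≤ Jcost K q p y := by
  classical
  have hKnn : ∀ a b, 0 ≤ K a b := by
    intro a b
    by_cases h : b = a
    · simp [h, hK0]
    · exact hKpos _ _ h
  by_cases hne : ((N i).erase i).Nonempty
  swap
  · refine ⟨1/2, by norm_num, by norm_num, ?_⟩
    intro y hy0 hyN hy1
    exact absurd ⟨y 1, Finset.mem_erase.2 ⟨hy1, hy0 ▸ hyN 0⟩⟩ hne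
  have huniv : (Finset.univ : Finset X).Nonempty := ⟨i, Finset.mem_univ i⟩
  set c : ℝ := ((N i).erase i).inf' hne (fun j => K i j + q j) with hc_def
  set m : ℝ := Finset.univ.inf' huniv q with hm_def
  have hc : q i < c := by
    rw [hc_def, Finset.lt_inf'_iff]
    intro j hj
    rw [Finset.mem_erase] at hj
    exact hi j hj.2 hj.1
  have hm0 : 0 < m := by
    rw [hm_def, Finset.lt_inf'_iff]
    intro x _; exact hq x
  set ε : ℝ := c - q i with hε_def
  have hε : 0 < ε := by simp [hε_def]; linarith
  set D : ℝ := |c - m| + 1 with hD_def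
  have hD : 0 < D := by positivity
  set p : ℝ := max (1/2) (1 - ε / D) with hp_def
  have hp0 : 0 < p := lt_of_lt_of_le (by norm_num) (le_max_left _ _)
  have hp1 : p < 1 := by
    apply max_lt (by norm_num)
    have : 0 < ε / D := div_pos hε hD
    linarith
  have hr0 : 0 ≤ 1 - p := by linarith
  have hr1 : 1 - p < 1 := by linarith
  refine ⟨p, hp0, hp1, ?_⟩
  intro y hy0 hyN hy1
  -- bounds on K and q for summability
  obtain ⟨B, hB⟩ : ∃ B : ℝ, ∀ a b : X, K a b ≤ B := by
    refine ⟨(Finset.univ ×ˢ Finset.univ).sup' (huniv.product huniv) (fun pr => K pr.1 pr.2), ?_⟩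
    intro a b
    have hmem : (a, b) ∈ Finset.univ ×ˢ (Finset.univ : Finset X) := by
      exact Finset.mem_product.2 ⟨Finset.mem_univ a, Finset.mem_univ b⟩
    exact Finset.le_sup' (fun pr : X × X => K pr.1 pr.2) hmem
  obtain ⟨Q, hQ⟩ : ∃ Q : ℝ, ∀ a : X, q a ≤ Q :=
    ⟨Finset.univ.sup' huniv q, fun a => Finset.le_sup' q (Finset.mem_univ a)⟩
  have hB0 : 0 ≤ B := le_trans (hKnn i i) (hB i i)
  have hQ0 : 0 ≤ Q := le_trans (hq i).le (hQ i)
  -- pathCost bounds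
  have hPCub : ∀ t : ℕ, pathCost K q y (t + 1) ≤ (t + 1) * B + Q := by
    intro t
    unfold pathCost
    have h1 : (∑ k ∈ Finset.range (t + 1), K (y k) (y (k + 1))) ≤ (t + 1) * B := by
      calc (∑ k ∈ Finset.range (t + 1), K (y k) (y (k + 1)))
          ≤ ∑ _k ∈ Finset.range (t + 1), B := Finset.sum_le_sum (fun k _ => hB _ _)
        _ = (t + 1) * B := by simp [mul_comm]
    have h2 := hQ (y (t + 1))
    push_cast
    linarith
  have hPClb : ∀ t : ℕ, m ≤ pathCost K q y (t + 1) := by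
    intro t
    unfold pathCost
    have h1 : (0:ℝ) ≤ ∑ k ∈ Finset.range (t + 1), K (y k) (y (k + 1)) :=
      Finset.sum_nonneg (fun k _ => hKnn _ _)
    have h2 : m ≤ q (y (t + 1)) := Finset.inf'_le q (Finset.mem_univ _)
    linarith
  have hPC1 : c ≤ pathCost K q y 1 := by
    have hmem : y 1 ∈ (N i).erase i := Finset.mem_erase.2 ⟨hy1, hy0 ▸ hyN 0⟩
    have h := Finset.inf'_le (fun j => K i j + q j) hmem
    have heq : pathCost K q y 1 = K i (y 1) + q (y 1) := by
      simp [pathCost, hy0]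
    rw [heq]
    exact h
  -- summability
  set a : ℕ → ℝ := fun t => (1 - p) ^ t * p * pathCost K q y (t + 1) with ha_def
  have ha_nn : ∀ t, 0 ≤ a t := by
    intro t
    have := le_trans hm0.le (hPClb t)
    positivity
  have hsum_a : Summable a := by
    have h1 : Summable (fun t : ℕ => (t:ℝ) ^ 1 * (1 - p) ^ t) :=
      summable_pow_mul_geometric_of_norm_lt_one 1 (by rw [Real.norm_eq_abs, abs_of_nonneg hr0]; exact hr1)
    have h2 : Summable (fun t : ℕ => (1 - p) ^ t) := summable_geometric_of_lt_one hr0 hr1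
    have h3 : Summable (fun t : ℕ => p * B * ((t:ℝ) ^ 1 * (1 - p) ^ t) + (p * (B + Q)) * (1 - p) ^ t) :=
      ((h1.mul_left _).add (h2.mul_left _))
    apply Summable.of_nonneg_of_le ha_nn _ h3
    intro t
    have hub := hPCub t
    have hpow : (0:ℝ) ≤ (1 - p) ^ t := pow_nonneg hr0 t
    have : a t ≤ (1 - p) ^ t * p * ((t + 1) * B + Q) := by
      rw [ha_def]
      exact mul_le_mul_of_nonneg_left hub (by positivity)
    calc a t ≤ (1 - p) ^ t * p * ((t + 1) * B + Q) := this
      _ = p * B * ((t:ℝ) ^ 1 * (1 - p) ^ t) + (p * (B + Q)) * (1 - p) ^ t := by ring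
  -- tail lower bound
  have hsum_tail : Summable (fun n : ℕ => a (n + 1)) := (summable_nat_add_iff 1).2 hsum_a
  have hsum_geo : Summable (fun n : ℕ => (1 - p) ^ (n + 1) * p * m) := by
    have h2 : Summable (fun t : ℕ => (1 - p) ^ t) := summable_geometric_of_lt_one hr0 hr1
    have := (h2.mul_left ((1 - p) * p * m))
    apply this.congr
    intro n; ring
  have htail_ge : (1 - p) * m ≤ ∑' n : ℕ, a (n + 1) := by
    have hle : ∀ n : ℕ, (1 - p) ^ (n + 1) * p * m ≤ a (n + 1) := by
      intro n
      rw [ha_def]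
      exact mul_le_mul_of_nonneg_left (hPClb (n + 1)) (by positivity)
    have := Summable.tsum_le_tsum hle hsum_geo hsum_tail
    have hgeo_val : ∑' n : ℕ, (1 - p) ^ (n + 1) * p * m = (1 - p) * m := by
      have h1 : ∑' n : ℕ, (1 - p) ^ n = (1 - (1 - p))⁻¹ := tsum_geometric_of_lt_one hr0 hr1
      calc ∑' n : ℕ, (1 - p) ^ (n + 1) * p * m
          = ∑' n : ℕ, ((1 - p) * p * m) * (1 - p) ^ n := by
            apply tsum_congr; intro n; ring
        _ = ((1 - p) * p * m) * (1 - (1 - p))⁻¹ := by rw [tsum_mul_left, h1]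
        _ = (1 - p) * m := by
            rw [sub_sub_cancel, mul_right_comm _ m, mul_inv_cancel_right₀ hp0.ne']
    linarith [hgeo_val ▸ this]
  -- head lower bound and conclusion
  have hsplit : Jcost K q p y = a 0 + ∑' n : ℕ, a (n + 1) := by
    rw [Jcost]
    exact Summable.tsum_eq_zero_add hsum_a
  have ha0 : p * c ≤ a 0 := by
    rw [ha_def]
    simpa using mul_le_mul_of_nonneg_left hPC1 hp0.le
  have hfinal : q i ≤ p * c + (1 - p) * m := by
    have h1p : 1 - p ≤ ε / D := by
      have := le_max_right (1/2 : ℝ) (1 - ε / D)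
      rw [hp_def]; linarith [le_max_right (1/2 : ℝ) (1 - ε / D)]
    have hkey : (1 - p) * (c - m) ≤ ε := by
      rcases le_or_gt (c - m) 0 with h | h
      · nlinarith
      · have hcmD : c - m ≤ D := by
          rw [hD_def]
          have := le_abs_self (c - m)
          linarith
        have : (1 - p) * (c - m) ≤ (ε / D) * (c - m) :=
          mul_le_mul_of_nonneg_right h1p h.le
        have h2 : (ε / D) * (c - m) ≤ (ε / D) * D :=
          mul_le_mul_of_nonneg_left hcmD (by positivity)
        have h3 : (ε / D) * D = ε := by field_simp
        linarith
    have : q i = c - ε := by rw [hε_def]; ring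
    nlinarith
  rw [hsplit]
  linarith
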